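/- The upper bound (N−1)/(N+1) of the asymmetry index is attained: the N×N matrix A with a_{ij} = 1 for j ≥ i and a_{ij} = 0 for j < i (upper triangular matrix of ones with unit diagonal) satisfies S̃(A) = (N−1)/(N+1). -/

import Mathlib

theorem asymmetry_index_upper_bound_attained (N : ℕ) (hN : 1 ≤ N)
    (A : Matrix (Fin N) (Fin N) ℝ)
    (hA : ∀ i j : Fin N, A i j = if i ≤ j then 1 else 0) :
    (∑ i, ∑ j, (A i j - A j i)^2) / (2 * ∑ i, ∑ j, (A i j)^2) = ((N:ℝ) - 1) / ((N:ℝ) + 1) := by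
  have hnum : (∑ i, ∑ j, (A i j - A j i)^2) = (N:ℝ) * ((N:ℝ) - 1) := by
    have h1 : ∀ i j : Fin N, (A i j - A j i)^2 = (1:ℝ) - if i = j then 1 else 0 := by
      intro i j
      rcases lt_trichotomy i j with h | h | h
      · simp [hA, le_of_lt h, not_le.2 h, h.ne]
      · simp [h, hA]
      · simp [hA, le_of_lt h, not_le.2 h, h.ne']
    calc (∑ i, ∑ j, (A i j - A j i)^2)
        = ∑ i : Fin N, ∑ j : Fin N, ((1:ℝ) - if i = j then 1 else 0) := by
          exact Finset.sum_congr rfl fun i _ => Finset.sum_congr rfl fun j _ => h1 i j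
      _ = ∑ i : Fin N, ((N:ℝ) - 1) := by
          refine Finset.sum_congr rfl fun i _ => ?_
          rw [Finset.sum_sub_distrib, Finset.sum_ite_eq]
          simp
      _ = (N:ℝ) * ((N:ℝ) - 1) := by simp [mul_comm]; ring
  have hden : (∑ i, ∑ j, (A i j)^2) = (N:ℝ) * ((N:ℝ) + 1) / 2 := by
    have hAs : (∑ i, ∑ j, (A i j)^2)
        = ∑ i : Fin N, ∑ j : Fin N, (if i ≤ j then (1:ℝ) else 0) := by
      refine Finset.sum_congr rfl fun i _ => Finset.sum_congr rfl fun j _ => ?_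
      rw [hA]; split <;> norm_num
    set S : ℝ := ∑ i : Fin N, ∑ j : Fin N, (if i ≤ j then (1:ℝ) else 0) with hS
    have hswap : S = ∑ i : Fin N, ∑ j : Fin N, (if j ≤ i then (1:ℝ) else 0) := by
      rw [hS, Finset.sum_comm]
    have h2 : S + S = (N:ℝ) * (N:ℝ) + N := by
      calc S + S = ∑ i : Fin N, ∑ j : Fin N,
            ((if i ≤ j then (1:ℝ) else 0) + (if j ≤ i then (1:ℝ) else 0)) := by
            nth_rewrite 2 [hswap]
            rw [← Finset.sum_add_distrib]
            exact Finset.sum_congr rfl fun i _ => (Finset.sum_add_distrib).symm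
        _ = ∑ i : Fin N, ∑ j : Fin N, ((1:ℝ) + if i = j then 1 else 0) := by
            refine Finset.sum_congr rfl fun i _ => Finset.sum_congr rfl fun j _ => ?_
            rcases lt_trichotomy i j with h | h | h
            · simp [le_of_lt h, not_le.2 h, h.ne]
            · simp [h]
            · simp [le_of_lt h, not_le.2 h, h.ne']
        _ = ∑ i : Fin N, ((N:ℝ) + 1) := by
            refine Finset.sum_congr rfl fun i _ => ?_
            rw [Finset.sum_add_distrib, Finset.sum_ite_eq]
            simp
        _ = (N:ℝ) * (N:ℝ) + N := by simp
    rw [hAs]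
    linarith
  rw [hnum, hden]
  have hNpos : (0:ℝ) < N := by exact_mod_cast hN
  rw [div_eq_div_iff (by nlinarith) (by linarith)]
  ring
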